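/- arXiv:2601.14097 — 10 statements merged into one kernel-verified Lean document; each statement's English description precedes it below -/
import Mathlib

section
/- Let G be a commutative group and M a commutative group (written multiplicatively), and let ω : G → G → M satisfy the 2-cocycle identity. Define h_ω : G → (G → M) by h_ω(g)(k) = ω(g,k)·ω(k,g)⁻¹. Then h_ω is multiplicative in each variable: for all g, g', k, k' ∈ G one has h_ω(g·g')(k) = h_ω(g)(k)·h_ω(g')(k) and h_ω(g)(k·k') = h_ω(g)(k)·h_ω(g)(k'). In particular, h_ω is a group homomorphism from G into the group of homomorphisms from G to M. -/
private lemma symmetry_map_left_hom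
    {G M : Type*} [CommGroup G] [CommGroup M] (ω : G → G → M)
    (hω : ∀ g h l : G, ω g h * ω (g * h) l = ω g (h * l) * ω h l) :
    ∀ g g' k : G,
      ω (g * g') k * (ω k (g * g'))⁻¹ =
        (ω g k * (ω k g)⁻¹) * (ω g' k * (ω k g')⁻¹) := by
  intro g g' k
  have h1 := hω g g' k
  have h2 := hω k g g'
  have h3 := hω g k g'
  rw [mul_comm g k, mul_comm k g'] at h3
  -- h3 : ω g k * ω (k * g) g' = ω g (g' * k) * ω k g'
  have key : ω (g * g') k * (ω k g * ω k g') = ω g k * ω g' k * ω k (g * g') := by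
    apply mul_left_cancel (a := ω g g')
    calc ω g g' * (ω (g * g') k * (ω k g * ω k g'))
        = (ω g g' * ω (g * g') k) * (ω k g * ω k g') := by
          rw [mul_assoc]
      _ = (ω g (g' * k) * ω g' k) * (ω k g * ω k g') := by rw [h1]
      _ = (ω g (g' * k) * ω k g') * (ω g' k * ω k g) := by
          simp only [mul_assoc, mul_comm, mul_left_comm]
      _ = (ω g k * ω (k * g) g') * (ω g' k * ω k g) := by rw [← h3]
      _ = ω g' k * ω g k * (ω k g * ω (k * g) g') := by
          simp only [mul_assoc, mul_comm, mul_left_comm]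
      _ = ω g' k * ω g k * (ω k (g * g') * ω g g') := by rw [h2]
      _ = ω g g' * (ω g k * ω g' k * ω k (g * g')) := by
          simp only [mul_assoc, mul_comm, mul_left_comm]
  rw [← div_eq_mul_inv, ← div_eq_mul_inv, ← div_eq_mul_inv, div_mul_div_comm,
    div_eq_div_iff_mul_eq_mul]
  exact key

/-- For a 2-cocycle `ω` on a commutative group `G` with values in a commutative group `M`,
the map `h_ω(g)(k) = ω(g,k)·ω(k,g)⁻¹` is multiplicative in each variable. -/
theorem symmetry_map_bihomomorphism
    {G M : Type*} [CommGroup G] [CommGroup M] (ω : G → G → M)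
    (hω : ∀ g h l : G, ω g h * ω (g * h) l = ω g (h * l) * ω h l) :
    (∀ g g' k : G,
      ω (g * g') k * (ω k (g * g'))⁻¹ =
        (ω g k * (ω k g)⁻¹) * (ω g' k * (ω k g')⁻¹)) ∧
    (∀ g k k' : G,
      ω g (k * k') * (ω (k * k') g)⁻¹ =
        (ω g k * (ω k g)⁻¹) * (ω g k' * (ω k' g)⁻¹)) := by
  refine ⟨symmetry_map_left_hom ω hω, ?_⟩
  intro g k k'
  have h := congrArg (·⁻¹) (symmetry_map_left_hom ω hω k k' g)
  simp only [mul_inv, inv_inv] at h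
  calc ω g (k * k') * (ω (k * k') g)⁻¹
      = (ω (k * k') g)⁻¹ * ω g (k * k') := mul_comm _ _
    _ = (ω k g)⁻¹ * ω g k * ((ω k' g)⁻¹ * ω g k') := h
    _ = (ω g k * (ω k g)⁻¹) * (ω g k' * (ω k' g)⁻¹) := by
        rw [mul_comm ((ω k g)⁻¹) (ω g k), mul_comm ((ω k' g)⁻¹) (ω g k')]
end

section
/- Fix n ∈ ℕ and a countable type ι, and let G = (Fin n → ℝ) × (ι →₀ ℤ) be the topological additive group obtained as the product of the vector group ℝⁿ with its standard topology and the free abelian group ι →₀ ℤ with the discrete topology. Let φ : G → ℝ be a continuous surjective additive group homomorphism. Then there exist an ℝ-linear subspace V' of (Fin n → ℝ) with dim V' = n − 1 and an additive subgroup Z' of G which is isomorphic as an additive group to ι →₀ ℤ, such that the map V' × Z' → G sending (v, z) to (v, 0) + z is injective and its image is exactly the kernel of φ. -/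
/-- Lemma: if `φ : ℝⁿ × (⊕ι ℤ) → ℝ` (with `ℝⁿ` a vector group and `⊕ι ℤ` discrete) is a
continuous surjective homomorphism, then `ker φ` splits as `V' × Z'` with `V'` a vector
subgroup of codimension one and `Z'` free abelian of the same rank as `⊕ι ℤ`. -/
theorem kernel_splitting_real
    (n : ℕ) (ι : Type*) [Countable ι]
    [TopologicalSpace (ι →₀ ℤ)] [DiscreteTopology (ι →₀ ℤ)]
    (φ : ((Fin n → ℝ) × (ι →₀ ℤ)) →+ ℝ)
    (hcont : Continuous φ) (hsurj : Function.Surjective φ) :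
    ∃ (V' : Submodule ℝ (Fin n → ℝ))
      (Z' : AddSubgroup ((Fin n → ℝ) × (ι →₀ ℤ))),
      Module.finrank ℝ V' = n - 1 ∧
      Nonempty (Z' ≃+ (ι →₀ ℤ)) ∧
      Function.Injective
        (fun p : V' × Z' =>
          (((p.1 : Fin n → ℝ), (0 : ι →₀ ℤ)) + (p.2 : (Fin n → ℝ) × (ι →₀ ℤ)))) ∧
      Set.range
        (fun p : V' × Z' =>
          (((p.1 : Fin n → ℝ), (0 : ι →₀ ℤ)) + (p.2 : (Fin n → ℝ) × (ι →₀ ℤ)))) =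
        (φ.ker : Set ((Fin n → ℝ) × (ι →₀ ℤ))) := by
  classical
  set G := (Fin n → ℝ) × (ι →₀ ℤ)
  -- restriction to the vector part, as a continuous additive hom
  set ψ : (Fin n → ℝ) →+ ℝ := φ.comp (AddMonoidHom.inl _ _) with hψdef
  have hψc : Continuous ψ := by
    have : Continuous (fun x : Fin n → ℝ => (x, (0 : ι →₀ ℤ))) :=
      continuous_id.prodMk continuous_const
    exact hcont.comp this
  -- it is real-linear
  set f : (Fin n → ℝ) →L[ℝ] ℝ := ψ.toRealLinearMap hψc with hfdef
  have hfψ : ∀ x, f x = φ (x, 0) := fun x => by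
    simp [hfdef, ψ.coe_toRealLinearMap hψc, hψdef, AddMonoidHom.inl]
  -- restriction to the discrete part
  set χ : (ι →₀ ℤ) →+ ℝ := φ.comp (AddMonoidHom.inr _ _) with hχdef
  have hχ : ∀ z, χ z = φ (0, z) := fun z => rfl
  have hsplit : ∀ x z, φ (x, z) = f x + χ z := by
    intro x z
    rw [hfψ, hχ, ← map_add]
    congr 1
    simp
  -- `f` is nonzero, since otherwise the range of `φ` would be countable
  have hf0 : ∃ x, f x ≠ 0 := by
    by_contra h
    push_neg at h
    have hsub : Set.range φ ⊆ Set.range χ := by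
      rintro _ ⟨⟨x, z⟩, rfl⟩
      exact ⟨z, by rw [hsplit x z, h x, zero_add]⟩
    have : (Set.univ : Set ℝ).Countable := by
      rw [← Set.range_eq_univ.2 hsurj]
      exact (Set.countable_range χ).mono hsub
    exact Cardinal.not_countable_real this
  obtain ⟨x₀, hx₀⟩ := hf0
  set w : Fin n → ℝ := (f x₀)⁻¹ • x₀ with hwdef
  have hfw : f w = 1 := by
    simp [hwdef, map_smul, inv_mul_cancel₀ hx₀]
  -- the vector subgroup
  refine ⟨LinearMap.ker (f : (Fin n → ℝ) →ₗ[ℝ] ℝ), ?_⟩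
  -- the free part: graph of `z ↦ -(χ z) • w`
  have gadd : ∀ a b : ι →₀ ℤ,
      ((-(χ (a + b)) • w, a + b) : G) = (-(χ a) • w, a) + (-(χ b) • w, b) := by
    intro a b
    simp [Prod.ext_iff, map_add, neg_add, add_smul, add_comm]
  set g : (ι →₀ ℤ) →+ G := AddMonoidHom.mk' (fun z => ((-(χ z) • w, z) : G)) gadd with hgdef
  have hginj : Function.Injective g := by
    intro a b hab
    have := congrArg Prod.snd hab
    simpa [hgdef] using this
  refine ⟨g.range, ?_, ⟨(AddMonoidHom.ofInjective hginj).symm⟩, ?_, ?_⟩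
  · -- finrank computation
    have hr : LinearMap.range (f : (Fin n → ℝ) →ₗ[ℝ] ℝ) = ⊤ := by
      rw [LinearMap.range_eq_top]
      intro c
      exact ⟨c • w, by simp [map_smul, hfw]⟩
    have := LinearMap.finrank_range_add_finrank_ker (f : (Fin n → ℝ) →ₗ[ℝ] ℝ)
    rw [hr, finrank_top] at this
    simp only [Module.finrank_self, Module.finrank_fin_fun] at this
    omega
  · -- injectivity
    have hsnd : ∀ c : G, c ∈ g.range → c = g c.2 := by
      rintro _ ⟨z, rfl⟩
      rfl
    rintro ⟨⟨v₁, hv₁⟩, ⟨c₁, hc₁⟩⟩ ⟨⟨v₂, hv₂⟩, ⟨c₂, hc₂⟩⟩ h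
    simp only [Prod.mk.injEq, Prod.ext_iff, Prod.fst_add, Prod.snd_add] at h
    have h2 : c₁.2 = c₂.2 := by simpa using h.2
    have hc : c₁ = c₂ := by rw [hsnd c₁ hc₁, hsnd c₂ hc₂, h2]
    have h1 : v₁ = v₂ := by
      have := h.1
      rw [hc] at this
      exact add_right_cancel this
    simp [h1, hc]
  · -- range = kernel
    ext ⟨x, z⟩
    simp only [Set.mem_range, SetLike.mem_coe, AddMonoidHom.mem_ker]
    constructor
    · rintro ⟨⟨⟨v, hv⟩, ⟨c, ⟨z₀, rfl⟩⟩⟩, h⟩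
      simp only [hgdef, AddMonoidHom.mk'_apply, Prod.mk.injEq, Prod.ext_iff, Prod.fst_add,
        Prod.snd_add] at h
      obtain ⟨h1, h2⟩ := h
      simp only [LinearMap.mem_ker, ContinuousLinearMap.coe_coe] at hv
      have : z = z₀ := by simpa using h2.symm
      subst this
      rw [hsplit, ← h1]
      simp only [map_add, map_neg, map_smul, ContinuousLinearMap.coe_coe, hfw, smul_eq_mul,
        mul_one, hv, zero_add, neg_add_cancel]
    · intro h
      rw [hsplit] at h
      refine ⟨⟨⟨x + (χ z) • w, ?_⟩, ⟨g z, ⟨z, rfl⟩⟩⟩, ?_⟩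
      · rw [LinearMap.mem_ker]
        simp only [map_add, map_smul, ContinuousLinearMap.coe_coe, hfw, smul_eq_mul, mul_one]
        linarith
      · simp only [hgdef, AddMonoidHom.mk'_apply, Prod.mk.injEq, Prod.ext_iff, Prod.fst_add,
          Prod.snd_add]
        constructor
        · module
        · simp
end

section
/- Fix n ∈ ℕ and a countable type ι, and let G = (Fin n → ℝ) × (ι →₀ ℤ) be the topological additive group obtained as the product of the vector group ℝⁿ with its standard topology and the free abelian group ι →₀ ℤ with the discrete topology. Let 𝕋 = ℝ/ℤ be the circle group (the additive circle of period 1), and let ψ : G → 𝕋 be a continuous surjective additive group homomorphism. Then there exist an ℝ-linear subspace V' of (Fin n → ℝ) with dim V' = n − 1, a nonzero vector v₀ ∈ (Fin n → ℝ), and an additive subgroup Z' of G isomorphic as an additive group to ι →₀ ℤ, such that the map V' × ℤ × Z' → G sending (v, k, z) to (v + k·v₀, 0) + z is injective and its image is exactly the kernel of ψ. -/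
open Set

lemma circle_hom_lift (φ : ℝ →+ AddCircle (1 : ℝ)) (hφ : Continuous φ) :
    ∃ c : ℝ, ∀ x : ℝ, φ x = ↑(x * c) := by
  haveI : Fact ((0:ℝ) < 1) := ⟨one_pos⟩
  set a : ℝ := -(2⁻¹) with ha
  set F : ℝ → ℝ := fun x => ((AddCircle.equivIco 1 a (φ x)) : ℝ) with hF
  have hFcoe : ∀ x, ((F x : ℝ) : AddCircle (1:ℝ)) = φ x := by
    intro x
    exact (AddCircle.equivIco 1 a).symm_apply_apply (φ x)
  have hFmem : ∀ x, F x ∈ Set.Ico a (a + 1) := fun x => (AddCircle.equivIco 1 a (φ x)).2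
  have haa : ((a : ℝ) : AddCircle (1:ℝ)) ≠ 0 := by
    intro h
    rw [AddCircle.coe_eq_zero_iff] at h
    obtain ⟨m, hm⟩ := h
    rw [zsmul_eq_mul, mul_one] at hm
    have h2 : (2 * m : ℤ) = (-1 : ℤ) := by
      have : (2:ℝ) * (m:ℝ) = -1 := by rw [hm]; ring
      exact_mod_cast this
    omega
  have hF0 : F 0 = 0 := by
    have h0mem : (0:ℝ) ∈ Set.Ico a (a + 1) := by constructor <;> norm_num [ha]
    have : ((F 0 : ℝ) : AddCircle (1:ℝ)) = ((0:ℝ) : AddCircle (1:ℝ)) := by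
      rw [hFcoe, map_zero, QuotientAddGroup.mk_zero]
    exact (AddCircle.coe_eq_coe_iff_of_mem_Ico (hFmem 0) h0mem).1 this
  have hFcont : ∀ x : ℝ, φ x ≠ ((a:ℝ) : AddCircle (1:ℝ)) → ContinuousAt F x := by
    intro x hx
    exact (continuousAt_subtype_val.comp (AddCircle.continuousAt_equivIco 1 a hx)).comp
      hφ.continuousAt
  have hFcont0 : ContinuousAt F 0 := by
    apply hFcont
    rw [map_zero]
    exact fun h => haa h.symm
  -- pick δ
  obtain ⟨ε, hε, hball⟩ : ∃ ε > 0, ∀ x : ℝ, |x| < ε → F x ∈ Set.Ioo (-(4⁻¹):ℝ) 4⁻¹ := by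
    have h4 : Set.Ioo (-(4⁻¹):ℝ) 4⁻¹ ∈ nhds (F 0) := by
      rw [hF0]; exact Ioo_mem_nhds (by norm_num) (by norm_num)
    have := hFcont0 h4
    rw [Filter.mem_map, Metric.mem_nhds_iff] at this
    obtain ⟨ε, hε, hsub⟩ := this
    refine ⟨ε, hε, fun x hx => hsub ?_⟩
    simpa [Metric.mem_ball, Real.dist_eq] using hx
  set δ : ℝ := ε / 2 with hδdef
  have hδ : 0 < δ := by positivity
  have hsmall : ∀ x : ℝ, |x| ≤ δ → F x ∈ Set.Ioo (-(4⁻¹):ℝ) 4⁻¹ := by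
    intro x hx
    refine hball x (lt_of_le_of_lt hx ?_)
    rw [hδdef]; linarith
  -- additivity at small scale
  have hA : ∀ x y : ℝ, |x| ≤ δ → |y| ≤ δ → |x + y| ≤ δ → F (x + y) = F x + F y := by
    intro x y hx hy hxy
    have hc : ((F (x+y) - F x - F y : ℝ) : AddCircle (1:ℝ)) = 0 := by
      rw [QuotientAddGroup.mk_sub, QuotientAddGroup.mk_sub, hFcoe, hFcoe, hFcoe,
        sub_sub, ← map_add φ, sub_eq_zero]
    rw [AddCircle.coe_eq_zero_iff] at hc
    obtain ⟨m, hm⟩ := hc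
    rw [zsmul_eq_mul, mul_one] at hm
    have b1 := hsmall _ hx
    have b2 := hsmall _ hy
    have b3 := hsmall _ hxy
    have hmz : (m : ℝ) = 0 := by
      have hm0 : |(m:ℝ)| < 1 := by
        rw [hm, abs_lt]
        constructor <;> linarith [b1.1, b1.2, b2.1, b2.2, b3.1, b3.2]
      have : |m| < 1 := by exact_mod_cast hm0
      simp [Int.abs_lt_one_iff.1 this]
    rw [hmz] at hm
    linarith
  -- multiples at small scale
  have hB : ∀ (m : ℕ) (t : ℝ), (m : ℝ) * |t| ≤ δ → F ((m : ℝ) * t) = m * F t := by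
    intro m
    induction m with
    | zero => intro t _; simpa using hF0
    | succ k ih =>
      intro t ht
      push_cast at ht ⊢
      have h0t : (0:ℝ) ≤ |t| := abs_nonneg t
      have hk0 : (0:ℝ) ≤ (k:ℝ) := Nat.cast_nonneg k
      have htd : |t| ≤ δ := by nlinarith
      have hktd : (k:ℝ) * |t| ≤ δ := by nlinarith
      have habs1 : |(k:ℝ) * t| ≤ δ := by
        rw [abs_mul, abs_of_nonneg hk0]; exact hktd
      have habs2 : |(k:ℝ) * t + t| ≤ δ := by
        have : (k:ℝ) * t + t = ((k:ℝ) + 1) * t := by ring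
        rw [this, abs_mul, abs_of_nonneg (by linarith : (0:ℝ) ≤ (k:ℝ)+1)]
        exact ht
      have : ((k:ℝ) + 1) * t = (k:ℝ) * t + t := by ring
      rw [this, hA _ _ habs1 htd habs2, ih t hktd]
      ring
  -- stabilization
  have hkey : ∀ (x : ℝ) (n m : ℕ), 0 < n → 0 < m → |x| ≤ n * δ →
      (n:ℝ) * F (x/n) = ((n:ℝ) * m) * F (x/((n:ℝ)*m)) := by
    intro x n m hn hm hx
    have hn0 : ((n:ℝ)) ≠ 0 := Nat.cast_ne_zero.2 hn.ne'
    have hm0 : ((m:ℝ)) ≠ 0 := Nat.cast_ne_zero.2 hm.ne'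
    have heq : (m:ℝ) * (x / ((n:ℝ)*m)) = x / n := by field_simp
    have hb : (m:ℝ) * |x / ((n:ℝ)*m)| ≤ δ := by
      have hxnn : |x / ((n:ℝ)*m)| = |x| / ((n:ℝ)*(m:ℝ)) := by
        rw [abs_div, abs_mul, Nat.abs_cast, Nat.abs_cast]
      rw [hxnn]
      have heq2 : (m:ℝ) * (|x| / ((n:ℝ)*(m:ℝ))) = |x| / (n:ℝ) := by field_simp
      rw [heq2, div_le_iff₀ (by positivity)]
      linarith [hx]
    have := hB m (x / ((n:ℝ)*m)) hb
    rw [heq] at this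
    rw [this]
    ring
  have hC : ∀ (x : ℝ) (n m : ℕ), 0 < n → 0 < m → |x| ≤ n * δ → |x| ≤ m * δ →
      (n:ℝ) * F (x/n) = (m:ℝ) * F (x/m) := by
    intro x n m hn hm hxn hxm
    have h1 := hkey x n m hn hm hxn
    have h2 := hkey x m n hm hn hxm
    rw [h1, h2, mul_comm ((n:ℝ)) ((m:ℝ))]
  -- the global lift
  set N : ℝ → ℕ := fun x => ⌊|x|/δ⌋₊ + 1 with hNdef
  have hN : ∀ x : ℝ, |x| ≤ (N x : ℝ) * δ := by
    intro x
    have h1 : |x|/δ < (⌊|x|/δ⌋₊ : ℝ) + 1 := Nat.lt_floor_add_one _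
    have : |x|/δ < (N x : ℝ) := by rw [hNdef]; push_cast; exact h1
    rw [div_lt_iff₀ hδ] at this
    linarith
  have hNpos : ∀ x : ℝ, 0 < N x := fun x => Nat.succ_pos _
  set f : ℝ → ℝ := fun x => (N x : ℝ) * F (x / (N x : ℝ)) with hfdef
  have hfn : ∀ (x : ℝ) (n : ℕ), 0 < n → |x| ≤ (n:ℝ) * δ → f x = (n:ℝ) * F (x/(n:ℝ)) := by
    intro x n hn hx
    exact hC x (N x) n (hNpos x) hn (hN x) hx
  have hfF : ∀ x : ℝ, |x| ≤ δ → f x = F x := by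
    intro x hx
    have := hfn x 1 one_pos (by rw [Nat.cast_one, one_mul]; exact hx)
    simpa using this
  have hadd : ∀ x y : ℝ, f (x + y) = f x + f y := by
    intro x y
    set n : ℕ := N x + N y with hn
    have hnpos : 0 < n := by positivity
    have hnc : (0:ℝ) < (n:ℝ) := Nat.cast_pos.2 hnpos
    have hxb : |x| ≤ (n:ℝ) * δ := by
      refine le_trans (hN x) ?_
      have : ((N x : ℝ)) ≤ (n:ℝ) := by exact_mod_cast Nat.le_add_right _ _
      nlinarith
    have hyb : |y| ≤ (n:ℝ) * δ := by
      refine le_trans (hN y) ?_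
      have : ((N y : ℝ)) ≤ (n:ℝ) := by exact_mod_cast Nat.le_add_left _ _
      nlinarith
    have hxyb : |x + y| ≤ (n:ℝ) * δ := by
      refine le_trans (abs_add_le x y) ?_
      have := hN x
      have := hN y
      have : ((N x : ℝ)) + (N y : ℝ) = (n:ℝ) := by rw [hn]; push_cast; ring
      nlinarith [hN x, hN y]
    rw [hfn (x+y) n hnpos hxyb, hfn x n hnpos hxb, hfn y n hnpos hyb]
    have hdiv : (x + y)/(n:ℝ) = x/(n:ℝ) + y/(n:ℝ) := add_div x y _
    have hax : |x/(n:ℝ)| ≤ δ := by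
      rw [abs_div, abs_of_pos hnc, div_le_iff₀ hnc]
      linarith
    have hay : |y/(n:ℝ)| ≤ δ := by
      rw [abs_div, abs_of_pos hnc, div_le_iff₀ hnc]
      linarith
    have haxy : |x/(n:ℝ) + y/(n:ℝ)| ≤ δ := by
      rw [← hdiv, abs_div, abs_of_pos hnc, div_le_iff₀ hnc]
      linarith
    rw [hdiv, hA _ _ hax hay haxy]
    ring
  have hcoe : ∀ x : ℝ, ((f x : ℝ) : AddCircle (1:ℝ)) = φ x := by
    intro x
    have h1 : f x = (N x : ℕ) • F (x / (N x : ℝ)) := by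
      rw [hfdef, nsmul_eq_mul]
    rw [h1]
    have h2 : (((N x : ℕ) • F (x / (N x : ℝ)) : ℝ) : AddCircle (1:ℝ)) =
        (N x : ℕ) • ((F (x / (N x : ℝ)) : ℝ) : AddCircle (1:ℝ)) := by
      exact QuotientAddGroup.mk_nsmul _ _ _
    rw [h2, hFcoe, ← map_nsmul φ]
    congr 1
    rw [nsmul_eq_mul, mul_div_cancel₀]
    exact Nat.cast_ne_zero.2 (hNpos x).ne'
  have hcont0 : ContinuousAt f 0 := by
    apply hFcont0.congr
    refine Filter.eventuallyEq_of_mem (Metric.closedBall_mem_nhds (0:ℝ) hδ) ?_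
    intro x hx
    rw [Metric.mem_closedBall, Real.dist_eq, sub_zero] at hx
    exact (hfF x hx).symm
  set fH : ℝ →+ ℝ := AddMonoidHom.mk' f hadd with hfH
  have hfHcont : Continuous fH := continuous_of_continuousAt_zero fH hcont0
  set lin := fH.toRealLinearMap hfHcont with hlin
  have hlinf : ∀ x, lin x = f x := fun x => congrFun (AddMonoidHom.coe_toRealLinearMap fH hfHcont) x
  refine ⟨f 1, fun x => ?_⟩
  have hfx : f x = x * f 1 := by
    have h2 : lin (x • (1:ℝ)) = x • lin 1 := lin.map_smul x 1
    rw [smul_eq_mul, mul_one, smul_eq_mul, hlinf, hlinf] at h2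
    exact h2
  rw [← hfx, hcoe]


/-- Lemma: if `ψ : ℝⁿ × (⊕ι ℤ) → ℝ/ℤ` (with `ℝⁿ` a vector group and `⊕ι ℤ` discrete) is a
continuous surjective homomorphism into the circle group, then `ker ψ` splits as
`V' × ℤv₀ × Z'` with `V'` a vector subgroup of codimension one, `v₀ ≠ 0`, and `Z'` free
abelian of the same rank as `⊕ι ℤ`. -/
theorem kernel_splitting_circle
    (n : ℕ) (ι : Type*) [Countable ι]
    [TopologicalSpace (ι →₀ ℤ)] [DiscreteTopology (ι →₀ ℤ)]
    (ψ : ((Fin n → ℝ) × (ι →₀ ℤ)) →+ AddCircle (1 : ℝ))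
    (hcont : Continuous ψ) (hsurj : Function.Surjective ψ) :
    ∃ (V' : Submodule ℝ (Fin n → ℝ)) (v₀ : Fin n → ℝ)
      (Z' : AddSubgroup ((Fin n → ℝ) × (ι →₀ ℤ))),
      Module.finrank ℝ V' = n - 1 ∧
      v₀ ≠ 0 ∧
      Nonempty (Z' ≃+ (ι →₀ ℤ)) ∧
      Function.Injective
        (fun p : V' × ℤ × Z' =>
          (((p.1 : Fin n → ℝ) + p.2.1 • v₀, (0 : ι →₀ ℤ)) +
            (p.2.2 : (Fin n → ℝ) × (ι →₀ ℤ)))) ∧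
      Set.range
        (fun p : V' × ℤ × Z' =>
          (((p.1 : Fin n → ℝ) + p.2.1 • v₀, (0 : ι →₀ ℤ)) +
            (p.2.2 : (Fin n → ℝ) × (ι →₀ ℤ)))) =
        (ψ.ker : Set ((Fin n → ℝ) × (ι →₀ ℤ))) := by
  classical
  haveI : Fact ((0:ℝ) < 1) := ⟨one_pos⟩
  -- coordinate homs on the vector part
  set φ : Fin n → (ℝ →+ AddCircle (1:ℝ)) := fun i =>
    ψ.comp (AddMonoidHom.mk' (fun t : ℝ => ((Pi.single i t : Fin n → ℝ), (0 : ι →₀ ℤ)))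
      (by intro a b; simp [Pi.single_add, Prod.ext_iff])) with hφdef
  have hφcont : ∀ i, Continuous (φ i) := by
    intro i
    have hco : (⇑(φ i)) = fun t : ℝ => ψ ((Pi.single i t : Fin n → ℝ), (0 : ι →₀ ℤ)) := rfl
    rw [hco]
    have h1 : Continuous (fun t : ℝ => (Pi.single i t : Fin n → ℝ)) := continuous_single (A := fun _ : Fin n => ℝ) i
    have hs : Continuous (fun t : ℝ => ((Pi.single i t : Fin n → ℝ), (0 : ι →₀ ℤ))) :=
      Continuous.prodMk h1 continuous_const
    exact hcont.comp hs
  choose c hc using fun i => circle_hom_lift (φ i) (hφcont i)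
  -- the linear functional L
  set L : (Fin n → ℝ) →ₗ[ℝ] ℝ :=
    { toFun := fun x => ∑ i, x i * c i
      map_add' := by intro x y; simp [add_mul, Finset.sum_add_distrib]
      map_smul' := by intro r x; simp [Finset.mul_sum, mul_assoc] } with hLdef
  have hψL : ∀ x : Fin n → ℝ, ψ (x, (0 : ι →₀ ℤ)) = ((L x : ℝ) : AddCircle (1:ℝ)) := by
    intro x
    have hxdec : ((x, (0 : ι →₀ ℤ)) : (Fin n → ℝ) × (ι →₀ ℤ)) =
        ∑ i, ((Pi.single i (x i) : Fin n → ℝ), (0 : ι →₀ ℤ)) := by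
      refine Prod.ext ?_ ?_
      · rw [Prod.fst_sum]
        simp [Finset.univ_sum_single]
      · rw [Prod.snd_sum]
        simp
    rw [hxdec, map_sum]
    have hterm : ∀ i, ψ ((Pi.single i (x i) : Fin n → ℝ), (0 : ι →₀ ℤ)) =
        ((x i * c i : ℝ) : AddCircle (1:ℝ)) := by
      intro i
      exact hc i (x i)
    rw [Finset.sum_congr rfl (fun i _ => hterm i)]
    have : ((L x : ℝ) : AddCircle (1:ℝ)) =
        (QuotientAddGroup.mk' (AddSubgroup.zmultiples (1:ℝ))) (∑ i, x i * c i) := rfl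
    rw [this, map_sum]
    rfl
  -- lift on the lattice part
  set r : ι → ℝ := fun i => ((AddCircle.equivIco 1 0 (ψ (0, Finsupp.single i 1))) : ℝ) with hrdef
  have hr : ∀ i, ((r i : ℝ) : AddCircle (1:ℝ)) = ψ (0, Finsupp.single i 1) := by
    intro i
    exact (AddCircle.equivIco 1 0).symm_apply_apply _
  set h : (ι →₀ ℤ) →+ ℝ := Finsupp.liftAddHom (fun i => zmultiplesHom ℝ (r i)) with hhdef
  have hψh : ∀ z : ι →₀ ℤ, ψ ((0 : Fin n → ℝ), z) = ((h z : ℝ) : AddCircle (1:ℝ)) := by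
    have : ψ.comp (AddMonoidHom.inr (Fin n → ℝ) (ι →₀ ℤ)) =
        (QuotientAddGroup.mk' (AddSubgroup.zmultiples (1:ℝ))).comp h := by
      apply Finsupp.addHom_ext
      intro i k
      simp only [AddMonoidHom.coe_comp, Function.comp_apply, AddMonoidHom.inr_apply, hhdef,
        Finsupp.liftAddHom_apply_single, zmultiplesHom_apply]
      have h1 : (QuotientAddGroup.mk' (AddSubgroup.zmultiples (1:ℝ))) (k • r i) =
          k • ((r i : ℝ) : AddCircle (1:ℝ)) := by
        exact map_zsmul (QuotientAddGroup.mk' (AddSubgroup.zmultiples (1:ℝ))) k (r i)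
      rw [h1, hr i, ← map_zsmul ψ]
      congr 1
      refine Prod.ext (by simp) ?_
      simp [Finsupp.smul_single]
    intro z
    have h2 := DFunLike.congr_fun this z
    simpa using h2
  have hψfull : ∀ (x : Fin n → ℝ) (z : ι →₀ ℤ),
      ψ (x, z) = ((L x + h z : ℝ) : AddCircle (1:ℝ)) := by
    intro x z
    have hdec : ((x, z) : (Fin n → ℝ) × (ι →₀ ℤ)) = (x, 0) + (0, z) := by
      refine Prod.ext (by simp) (by simp)
    rw [hdec, map_add, hψL, hψh, ← QuotientAddGroup.mk_add]
  -- L is nonzero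
  have hLex : ∃ x, L x ≠ 0 := by
    by_contra h0
    push_neg at h0
    have hsur2 : Function.Surjective (fun z : ι →₀ ℤ => ((h z : ℝ) : AddCircle (1:ℝ))) := by
      intro y
      obtain ⟨⟨x, z⟩, hxz⟩ := hsurj y
      exact ⟨z, by rw [← hxz, hψfull x z, h0 x, zero_add]⟩
    haveI : Countable (AddCircle (1:ℝ)) := hsur2.countable
    have hinjR : Function.Injective
        (fun x : ℝ => (((x : ℝ) : AddCircle (1:ℝ)), ⌊x⌋)) := by
      intro x y hxy
      have h1 : ((x : ℝ) : AddCircle (1:ℝ)) = ((y : ℝ) : AddCircle (1:ℝ)) :=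
        congrArg Prod.fst hxy
      have h2 : ⌊x⌋ = ⌊y⌋ := congrArg Prod.snd hxy
      have h3 : ((x - y : ℝ) : AddCircle (1:ℝ)) = 0 := by
        rw [QuotientAddGroup.mk_sub, h1, sub_self]
      rw [AddCircle.coe_eq_zero_iff] at h3
      obtain ⟨m, hm⟩ := h3
      rw [zsmul_eq_mul, mul_one] at hm
      have hfx : x - y = Int.fract x - Int.fract y := by
        rw [← Int.self_sub_floor, ← Int.self_sub_floor, h2]; ring
      have hb : |(m:ℝ)| < 1 := by
        rw [hm, hfx, abs_lt]
        constructor <;>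
          linarith [Int.fract_nonneg x, Int.fract_lt_one x, Int.fract_nonneg y,
            Int.fract_lt_one y]
      have hmabs : |m| < 1 := by exact_mod_cast hb
      have hm0 : m = 0 := Int.abs_lt_one_iff.1 hmabs
      rw [hm0] at hm
      push_cast at hm
      linarith
    haveI : Countable ℝ := hinjR.countable
    exact not_countable (α := ℝ) this
  obtain ⟨x0, hx0⟩ := hLex
  set u : Fin n → ℝ := (L x0)⁻¹ • x0 with hudef
  have hLu : L u = 1 := by
    rw [hudef, map_smul, smul_eq_mul, inv_mul_cancel₀ hx0]
  have hu0 : u ≠ 0 := by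
    intro hu
    rw [hu, map_zero] at hLu
    exact one_ne_zero hLu.symm
  set V' : Submodule ℝ (Fin n → ℝ) := LinearMap.ker L with hVdef
  have hV : Module.finrank ℝ V' = n - 1 := by
    have hrange : LinearMap.range L = ⊤ := by
      rw [LinearMap.range_eq_top]
      intro y
      exact ⟨y • u, by rw [map_smul, hLu, smul_eq_mul, mul_one]⟩
    have hrk := LinearMap.finrank_range_add_finrank_ker L
    rw [hrange, finrank_top, Module.finrank_self, Module.finrank_fin_fun] at hrk
    rw [hVdef]
    omega
  set sH : (ι →₀ ℤ) →+ (Fin n → ℝ) :=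
    AddMonoidHom.mk' (fun z => (-(h z)) • u)
      (by
        intro a b
        show (-(h (a + b))) • u = (-(h a)) • u + (-(h b)) • u
        rw [map_add, neg_add, add_smul]) with hsdef
  set σ : (ι →₀ ℤ) →+ ((Fin n → ℝ) × (ι →₀ ℤ)) := sH.prod (AddMonoidHom.id _) with hσdef
  have hσ : ∀ z, σ z = ((-(h z)) • u, z) := fun z => rfl
  have hσinj : Function.Injective σ := by
    intro z1 z2 hz
    have h2 := congrArg Prod.snd hz
    simpa [hσ] using h2
  set Z' : AddSubgroup ((Fin n → ℝ) × (ι →₀ ℤ)) := σ.range with hZdef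
  have hzu : ∀ m : ℤ, (m • u : Fin n → ℝ) = (m : ℝ) • u :=
    fun m => (Int.cast_smul_eq_zsmul ℝ m u).symm
  have hΦval : ∀ (v : Fin n → ℝ) (k : ℤ) (b : ι →₀ ℤ), L v = 0 →
      ψ (((v + k • u), (0:ι→₀ℤ)) + σ b) = 0 := by
    intro v k b hv
    have hsum : (((v + k • u), (0:ι→₀ℤ)) + σ b) = ((v + k • u + (-(h b)) • u), b) := by
      rw [hσ]
      exact Prod.ext rfl (zero_add b)
    rw [hsum, hψfull]
    have hL2 : L (v + k • u + (-(h b)) • u) + h b = (k : ℝ) := by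
      simp only [hzu, map_add, map_smul, hLu, hv, smul_eq_mul, mul_one]
      ring
    rw [hL2, AddCircle.coe_eq_zero_iff]
    exact ⟨k, by rw [zsmul_eq_mul, mul_one]⟩
  refine ⟨V', u, Z', hV, hu0, ⟨(AddMonoidHom.ofInjective hσinj).symm⟩, ?_, ?_⟩
  · rintro ⟨⟨v1, hv1⟩, k1, ⟨z1, hz1⟩⟩ ⟨⟨v2, hv2⟩, k2, ⟨z2, hz2⟩⟩ heq
    obtain ⟨b1, rfl⟩ := AddMonoidHom.mem_range.1 hz1
    obtain ⟨b2, rfl⟩ := AddMonoidHom.mem_range.1 hz2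
    simp only [hσ, Prod.mk_add_mk, Prod.mk.injEq] at heq
    obtain ⟨h1, h2⟩ := heq
    rw [zero_add, zero_add] at h2
    subst h2
    have h1' : v1 + k1 • u = v2 + k2 • u := add_right_cancel h1
    have hk : (k1 : ℝ) = (k2 : ℝ) := by
      have hc := congrArg L h1'
      simp only [hzu, map_add, map_smul, hLu, LinearMap.mem_ker.1 hv1,
        LinearMap.mem_ker.1 hv2, smul_eq_mul, mul_one, zero_add] at hc
      exact hc
    have hk2 : k1 = k2 := by exact_mod_cast hk
    subst hk2
    have hveq : v1 = v2 := add_right_cancel h1'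
    subst hveq
    rfl
  · ext g
    constructor
    · rintro ⟨⟨⟨v, hv⟩, k, ⟨z, hz⟩⟩, rfl⟩
      obtain ⟨b, rfl⟩ := AddMonoidHom.mem_range.1 hz
      simp only [SetLike.mem_coe, AddMonoidHom.mem_ker]
      exact hΦval v k b (LinearMap.mem_ker.1 hv)
    · intro hg
      obtain ⟨x, b⟩ := g
      rw [SetLike.mem_coe, AddMonoidHom.mem_ker, hψfull, AddCircle.coe_eq_zero_iff] at hg
      obtain ⟨m, hm⟩ := hg
      rw [zsmul_eq_mul, mul_one] at hm
      set v : Fin n → ℝ := x - m • u + (h b) • u with hvdef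
      have hvK : L v = 0 := by
        simp only [hvdef, hzu, map_add, map_sub, map_smul, hLu, smul_eq_mul, mul_one]
        linarith [hm]
      refine ⟨(⟨v, LinearMap.mem_ker.2 hvK⟩, m, ⟨σ b, AddMonoidHom.mem_range.2 ⟨b, rfl⟩⟩), ?_⟩
      show ((v + m • u, (0:ι→₀ℤ)) + σ b) = (x, b)
      rw [hσ, Prod.mk_add_mk, zero_add]
      refine Prod.ext ?_ rfl
      show v + m • u + (-(h b)) • u = x
      rw [hvdef, hzu m, neg_smul]
      generalize (m : ℝ) • u = a
      generalize (h b) • u = cc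
      abel
end

section
/- Let F be a finite group acting on a T0 topological space X such that for every g ∈ F the map x ↦ g•x is continuous. Then for every x ∈ X the orbit F•x = {g•x : g ∈ F}, equipped with the subspace topology, is discrete. -/
/-- If a finite group `F` acts by homeomorphisms on a T₀ space `X`, then every orbit is
discrete in the subspace topology. -/
theorem orbit_discrete_of_finite_group_action
    {F X : Type*} [Group F] [Finite F] [TopologicalSpace X] [T0Space X]
    [MulAction F X] (hc : ∀ g : F, Continuous fun x : X => g • x) (x : X) :
    DiscreteTopology (MulAction.orbit F x) := by
  have hfin : (MulAction.orbit F x).Finite := Finite.finite_mulAction_orbit x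
  have : Finite (MulAction.orbit F x) := hfin.to_subtype
  have ht1 : T1Space (MulAction.orbit F x) := by
    rw [t1Space_iff_specializes_imp_eq]
    rintro ⟨a, ha⟩ ⟨b, hb⟩ h
    rw [subtype_specializes_iff] at h
    obtain ⟨g, rfl⟩ : ∃ g : F, g • a = b := by
      obtain ⟨g1, rfl⟩ := ha
      obtain ⟨g2, rfl⟩ := hb
      exact ⟨g2 * g1⁻¹, by simp [mul_smul]⟩
    have key : ∀ n : ℕ, a ⤳ ((g ^ n) • a : X) := by
      intro n
      induction n with
      | zero => simpa using specializes_rfl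
      | succ n ih =>
        refine h.trans ?_
        have := ih.map (hc g)
        simpa [← mul_smul, pow_succ'] using this
    obtain ⟨n, hn, hgn⟩ := (isOfFinOrder_of_finite g).exists_pow_eq_one
    have h2 : (g • a : X) ⤳ a := by
      have := (key (n - 1)).map (hc g)
      simp only [← mul_smul] at this
      rwa [← pow_succ', Nat.sub_add_cancel hn, hgn, one_smul] at this
    have heq : (a : X) = g • a := (h.antisymm h2).eq
    exact Subtype.ext heq
  exact Finite.instDiscreteTopology
end

section
/- Let F be a finite group acting on a T0 topological space X such that for every g ∈ F the map x ↦ g•x is continuous, and let x ∈ X be such that the singleton {x} is locally closed in X. Then the orbit F•x = {g•x : g ∈ F} is locally closed in X. -/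
open Pointwise

/-- If a finite group `F` acts by homeomorphisms on a T₀ space `X` and `{x}` is locally
closed in `X`, then the orbit `F•x` is locally closed in `X`. -/
theorem orbit_isLocallyClosed_of_finite_group_action
    {F X : Type*} [Group F] [Finite F] [TopologicalSpace X] [T0Space X]
    [MulAction F X] (hc : ∀ g : F, Continuous fun x : X => g • x) (x : X)
    (hx : IsLocallyClosed ({x} : Set X)) :
    IsLocallyClosed (MulAction.orbit F x) := by
  haveI : ContinuousConstSMul F X := ⟨hc⟩
  obtain ⟨U, Z, hU, hZ, hUZ⟩ := hx
  have hxU : x ∈ U := by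
    have : x ∈ U ∩ Z := by rw [← hUZ]; rfl
    exact this.1
  have hcl : U ∩ closure ({x} : Set X) = {x} := by
    apply subset_antisymm
    · intro y hy
      rw [hUZ]
      exact ⟨hy.1, (hZ.closure_subset_iff.mpr (by rw [hUZ]; exact Set.inter_subset_right)) hy.2⟩
    · rintro y rfl
      exact ⟨hxU, subset_closure rfl⟩
  -- key: specialization within the orbit implies equality
  have key : ∀ g : F, ((g • x) ⤳ x) → g • x = x := by
    intro g hg
    have pow : ∀ k : ℕ, ((g ^ (k + 1)) • x) ⤳ ((g ^ k) • x) := by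
      intro k
      have := hg.map (hc (g ^ k))
      simpa [← mul_smul, ← pow_succ] using this
    have chain : ∀ k : ℕ, ((g ^ k) • x) ⤳ x := by
      intro k
      induction k with
      | zero => simpa using specializes_rfl
      | succ n ih => exact (pow n).trans ih
    have hx2 : x ⤳ (g • x) := by
      have h1 : ((g ^ (orderOf g - 1)) • x) ⤳ x := chain _
      have h2 := h1.map (hc g)
      have horder : g * g ^ (orderOf g - 1) = g ^ orderOf g := by
        rw [← pow_succ']
        congr 1
        have := orderOf_pos g
        omega
      have h3 : ((g ^ orderOf g) • x) ⤳ (g • x) := by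
        simpa [← mul_smul, horder] using h2
      simpa [pow_orderOf_eq_one] using h3
    exact (hg.antisymm hx2).eq
  have key2 : ∀ g h : F, ((h • x) ⤳ (g • x)) → h • x = g • x := by
    intro g h hgh
    have h1 := hgh.map (hc g⁻¹)
    simp only [← mul_smul] at h1
    have h2 : (g⁻¹ * h) • x = x := key (g⁻¹ * h) (by simpa using h1)
    calc h • x = g • (g⁻¹ * h) • x := by simp [← mul_smul, mul_assoc]
      _ = g • x := by rw [h2]
  have horbfin : (MulAction.orbit F x).Finite := Set.finite_range _
  have hclS : ∀ S : Set X, S.Finite → closure S = ⋃ s ∈ S, closure {s} := by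
    intro S hS
    conv_lhs => rw [← Set.biUnion_of_singleton S]
    exact hS.closure_biUnion _
  set V : Set X := ⋃ g : F, ((g • U) ∩ (closure (MulAction.orbit F x \ {g • x}))ᶜ) with hV
  have hVopen : IsOpen V :=
    isOpen_iUnion fun g => (hU.smul g).inter (isOpen_compl_iff.mpr isClosed_closure)
  refine ⟨V, closure (MulAction.orbit F x), hVopen, isClosed_closure, ?_⟩
  apply subset_antisymm
  · rintro y ⟨g, rfl⟩
    refine ⟨Set.mem_iUnion.mpr ⟨g, ⟨⟨x, hxU, rfl⟩, ?_⟩⟩,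
      subset_closure (MulAction.mem_orbit x g)⟩
    intro hmem
    rw [hclS _ horbfin.diff] at hmem
    obtain ⟨s, hs, hmem⟩ := Set.mem_iUnion₂.mp hmem
    obtain ⟨⟨h, rfl⟩, hne⟩ := hs
    exact hne (key2 g h (specializes_iff_mem_closure.mpr hmem))
  · rintro y ⟨hyV, hycl⟩
    obtain ⟨g, hgU, hgC⟩ := Set.mem_iUnion.mp hyV
    rw [hclS _ horbfin] at hycl
    obtain ⟨s, hs, hycl⟩ := Set.mem_iUnion₂.mp hycl
    have hsg : s = g • x := by
      by_contra hne
      have hmem : s ∈ MulAction.orbit F x \ {g • x} := ⟨hs, hne⟩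
      exact hgC ((closure_mono (Set.singleton_subset_iff.mpr hmem)) hycl)
    rw [hsg] at hycl
    have : y ∈ g • (U ∩ closure ({x} : Set X)) := by
      rw [Set.smul_set_inter]
      refine ⟨hgU, ?_⟩
      rw [← closure_smul, Set.smul_set_singleton]
      exact hycl
    rw [hcl, Set.smul_set_singleton] at this
    rw [Set.mem_singleton_iff.mp this]
    exact MulAction.mem_orbit x g
end

section
/- Let G be a group acting on a T0 topological space X such that for every g ∈ G the map x ↦ g•x is continuous. Let x ∈ X and g ∈ G, and suppose there exists a natural number n ≥ 1 with gⁿ•x = x (for instance, g has finite order). If g•x ∈ closure {x}, then g•x = x. -/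
/-- If a group `G` acts by homeomorphisms on a T₀ space `X`, `gⁿ•x = x` for some `n ≥ 1`,
and `g•x ∈ closure {x}`, then `g•x = x`. -/
theorem smul_eq_self_of_mem_closure
    {G X : Type*} [Group G] [TopologicalSpace X] [T0Space X] [MulAction G X]
    (hc : ∀ g : G, Continuous fun x : X => g • x)
    (x : X) (g : G) (hn : ∃ n : ℕ, 1 ≤ n ∧ g ^ n • x = x)
    (h : g • x ∈ closure ({x} : Set X)) :
    g • x = x := by
  obtain ⟨n, hn1, hnx⟩ := hn
  -- every g^k • x (k ≥ 1) is in closure {x}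
  have key : ∀ k : ℕ, 1 ≤ k → g ^ k • x ∈ closure ({x} : Set X) := by
    intro k hk
    induction k with
    | zero => omega
    | succ m ih =>
      rcases Nat.eq_or_lt_of_le hk with h1 | h1
      · simpa [← h1] using h
      · have hm : 1 ≤ m := by omega
        have hmem := ih hm
        -- apply g to closure
        have := (hc g).continuousAt (x := g ^ m • x)
        have h2 : g • (g ^ m • x) ∈ closure ((fun y : X => g • y) '' {x}) := by
          have := image_closure_subset_closure_image (f := fun y : X => g • y) (hc g)
            (s := ({x} : Set X))
          exact this ⟨_, hmem, rfl⟩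
        have h3 : closure ((fun y : X => g • y) '' ({x} : Set X)) ⊆
            closure ({x} : Set X) := by
          apply closure_minimal _ isClosed_closure
          rintro _ ⟨y, rfl, rfl⟩
          exact h
        have h4 := h3 h2
        rwa [pow_succ', mul_smul]
  rcases Nat.eq_or_lt_of_le hn1 with h1 | h1
  · simpa [← h1, pow_one] using hnx
  · have hm : 1 ≤ n - 1 := by omega
    have hmem := key (n - 1) hm
    have h2 : g • (g ^ (n - 1) • x) ∈ closure ((fun y : X => g • y) '' {x}) :=
      image_closure_subset_closure_image (hc g) ⟨_, hmem, rfl⟩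
    have h3 : closure ((fun y : X => g • y) '' ({x} : Set X)) ⊆
        closure ({g • x} : Set X) := by
      apply closure_mono; rintro _ ⟨y, rfl, rfl⟩; rfl
    have h4 := h3 h2
    have h5 : g • g ^ (n - 1) • x = x := by
      rw [← mul_smul, ← pow_succ']
      have : n - 1 + 1 = n := by omega
      rw [this, hnx]
    rw [h5] at h4
    -- now x ∈ closure {g•x} and g•x ∈ closure {x}
    exact ((specializes_iff_mem_closure.mpr h).antisymm
      (specializes_iff_mem_closure.mpr h4)).eq.symm
end

section
/- Let X be a topological space and let s ⊆ X be a finite set such that: (i) for every p ∈ s the singleton {p} is locally closed in X, and (ii) for all p, q ∈ s, if p ∈ closure {q} then p = q. Then s is locally closed in X. -/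
/-- A finite subset `s` of a topological space, each of whose points has locally closed
singleton and no point of which lies in the closure of another point of `s`, is locally
closed. -/
theorem finite_isLocallyClosed_of_separated
    {X : Type*} [TopologicalSpace X] (s : Set X) (hs : s.Finite)
    (h1 : ∀ p ∈ s, IsLocallyClosed ({p} : Set X))
    (h2 : ∀ p ∈ s, ∀ q ∈ s, p ∈ closure ({q} : Set X) → p = q) :
    IsLocallyClosed s := by
  rw [isLocallyClosed_iff_isOpen_coborder, coborder, isOpen_compl_iff]
  have hclos : closure s = ⋃ p ∈ s, closure ({p} : Set X) := by
    conv_lhs => rw [← Set.biUnion_of_singleton s]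
    exact hs.closure_biUnion _
  have key : closure s \ s = ⋃ p ∈ s, (closure ({p} : Set X) \ {p}) := by
    rw [hclos]
    ext x
    simp only [Set.mem_diff, Set.mem_iUnion, Set.mem_singleton_iff]
    constructor
    · rintro ⟨⟨p, hp, hx⟩, hxs⟩
      exact ⟨p, hp, hx, fun h => hxs (h ▸ hp)⟩
    · rintro ⟨p, hp, hx, hxp⟩
      exact ⟨⟨p, hp, hx⟩, fun hxs => hxp (h2 x hxs p hp hx)⟩
  rw [key]
  apply Set.Finite.isClosed_biUnion hs
  intro p hp
  have := (h1 p hp).isOpen_coborder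
  rw [coborder, isOpen_compl_iff] at this
  exact this
end

section
/- Let X be a topological space such that every nonempty closed subset Z ⊆ X contains a subset U which is dense in Z, open in the subspace topology of Z, and Hausdorff in the subspace topology (i.e., X is almost Hausdorff). Then for every x ∈ X the singleton {x} is locally closed in X. -/
/-- In an almost Hausdorff space (every nonempty closed subset contains a dense,
relatively open, Hausdorff subset), every singleton is locally closed. -/
theorem singleton_isLocallyClosed_of_almostHausdorff
    {X : Type*} [TopologicalSpace X]
    (hAH : ∀ Z : Set X, IsClosed Z → Z.Nonempty →
      ∃ U : Set X, U ⊆ Z ∧ Z ⊆ closure U ∧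
        (∃ V : Set X, IsOpen V ∧ U = V ∩ Z) ∧ T2Space U) :
    ∀ x : X, IsLocallyClosed ({x} : Set X) := by
  intro x
  set Z := closure ({x} : Set X) with hZ
  have hxZ : x ∈ Z := subset_closure rfl
  obtain ⟨U, hUZ, hdense, ⟨V, hV, hUV⟩, hT2⟩ :=
    hAH Z isClosed_closure ⟨x, hxZ⟩
  -- U is nonempty
  obtain ⟨y, hyU⟩ : U.Nonempty := by
    rcases Set.eq_empty_or_nonempty U with h | h
    · exfalso
      have := hdense hxZ
      rw [h, closure_empty] at this
      exact this
    · exact h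
  -- x ∈ V
  have hyV : y ∈ V := (hUV ▸ hyU).1
  have hyZ : y ∈ Z := hUZ hyU
  have hxV : x ∈ V := by
    rcases (mem_closure_iff.mp hyZ) V hV hyV with ⟨z, hzV, hzx⟩
    rcases hzx with rfl
    exact hzV
  have hxU : x ∈ U := hUV ▸ ⟨hxV, hxZ⟩
  -- U = {x}
  have hUeq : U = {x} := by
    apply Set.eq_singleton_iff_unique_mem.mpr
    refine ⟨hxU, fun u huU => ?_⟩
    by_contra hne
    have hclosed : IsClosed ({(⟨x, hxU⟩ : U)} : Set U) := isClosed_singleton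
    have hopen : IsOpen ({(⟨x, hxU⟩ : U)}ᶜ : Set U) := hclosed.isOpen_compl
    rw [isOpen_induced_iff] at hopen
    obtain ⟨W, hW, hWeq⟩ := hopen
    have huW : (⟨u, huU⟩ : U) ∈ (Subtype.val ⁻¹' W : Set U) := by
      rw [hWeq]
      simp [Subtype.ext_iff, hne]
    have huWX : u ∈ W := huW
    have huZ : u ∈ Z := hUZ huU
    rcases (mem_closure_iff.mp huZ) W hW huWX with ⟨z, hzW, hzx⟩
    rcases hzx with rfl
    have : (⟨z, hxU⟩ : U) ∈ (Subtype.val ⁻¹' W : Set U) := hzW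
    rw [hWeq] at this
    exact this rfl
  exact ⟨V, Z, hV, isClosed_closure, by rw [← hUeq, hUV]⟩
end

section
/- Fix n ∈ ℕ and a countable type ι, and let G = (Fin n → ℝ) × (ι →₀ ℤ) be the topological additive group obtained as the product of the vector group ℝⁿ with its standard topology and the free abelian group ι →₀ ℤ with the discrete topology. If φ : G → ℝ is a continuous surjective additive group homomorphism, then the additive homomorphism from (Fin n → ℝ) to ℝ given by v ↦ φ(v, 0) is surjective. -/
/-- If `φ : ℝⁿ × (⊕ι ℤ) → ℝ` (with `ℝⁿ` a vector group and `⊕ι ℤ` countable discrete) is a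
continuous surjective homomorphism, then its restriction to the vector factor is already
surjective. -/
theorem vector_factor_surjective_real
    (n : ℕ) (ι : Type*) [Countable ι]
    [TopologicalSpace (ι →₀ ℤ)] [DiscreteTopology (ι →₀ ℤ)]
    (φ : ((Fin n → ℝ) × (ι →₀ ℤ)) →+ ℝ)
    (hcont : Continuous φ) (hsurj : Function.Surjective φ) :
    Function.Surjective (fun v : Fin n → ℝ => φ (v, 0)) := by
  set ψ : (Fin n → ℝ) →+ ℝ := φ.comp (AddMonoidHom.inl _ _) with hψ
  have hψcont : Continuous ψ := hcont.comp (continuous_id.prodMk continuous_const)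
  have hlin := ψ.coe_toRealLinearMap hψcont
  by_cases h : ∃ v, ψ v ≠ 0
  · obtain ⟨v, hv⟩ := h
    intro r
    refine ⟨(r / ψ v) • v, ?_⟩
    have : ψ ((r / ψ v) • v) = (r / ψ v) * ψ v := by
      rw [← hlin, map_smul]; rfl
    simpa [this, div_mul_cancel₀ r hv] using this ▸ div_mul_cancel₀ r hv
  · exfalso
    push_neg at h
    have hrange : Set.range φ ⊆ Set.range (fun x : ι →₀ ℤ => φ (0, x)) := by
      rintro y ⟨⟨v, x⟩, rfl⟩
      refine ⟨x, ?_⟩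
      have : φ (v, x) = ψ v + φ (0, x) := by
        rw [hψ]; simp [← map_add, Prod.ext_iff]
      simp [this, h v]
    have hcount : (Set.range (fun x : ι →₀ ℤ => φ (0, x))).Countable :=
      Set.countable_range _
    have : (Set.univ : Set ℝ).Countable := by
      have := hcount.mono hrange
      rwa [Set.range_eq_univ.mpr hsurj] at this
    exact Cardinal.not_countable_real (by simpa using this)
end

section
/- Fix n ∈ ℕ and a countable type ι, and let G = (Fin n → ℝ) × (ι →₀ ℤ) be the topological additive group obtained as the product of the vector group ℝⁿ with its standard topology and the free abelian group ι →₀ ℤ with the discrete topology. Let 𝕋 = ℝ/ℤ be the circle group (the additive circle of period 1). If ψ : G → 𝕋 is a continuous surjective additive group homomorphism, then the additive homomorphism from (Fin n → ℝ) to 𝕋 given by v ↦ ψ(v, 0) is surjective. -/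
/-- Every element of `AddCircle 1` has a representative of absolute value equal to its norm. -/
lemma addCircle_exists_rep (x : AddCircle (1 : ℝ)) :
    ∃ r : ℝ, (r : AddCircle (1:ℝ)) = x ∧ |r| = ‖x‖ := by
  obtain ⟨s, rfl⟩ := QuotientAddGroup.mk_surjective x
  refine ⟨s - round s, ?_, ?_⟩
  · have h0 : ((round s : ℝ) : AddCircle (1:ℝ)) = 0 := by
      rw [QuotientAddGroup.eq_zero_iff]
      exact AddSubgroup.intCast_mem_zmultiples_one _
    rw [QuotientAddGroup.mk_sub]
    show _ - ((round s : ℝ) : AddCircle (1:ℝ)) = _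
    rw [h0, sub_zero]
  · rw [AddCircle.norm_eq]
    simp

/-- Elements of `AddCircle 1` with the same norm agree up to sign. -/
lemma addCircle_norm_eq_norm {x y : AddCircle (1 : ℝ)} (h : ‖x‖ = ‖y‖) : x = y ∨ x = -y := by
  obtain ⟨r, hr, hr'⟩ := addCircle_exists_rep x
  obtain ⟨t, ht, ht'⟩ := addCircle_exists_rep y
  have habs : |r| = |t| := by rw [hr', ht', h]
  rcases abs_eq_abs.mp habs with h1 | h1
  · left; rw [← hr, ← ht, h1]
  · right; rw [← hr, ← ht, h1]
    exact (QuotientAddGroup.mk_neg _ t)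

/-- The circle is uncountable. -/
lemma addCircle_uncountable : ¬ Countable (AddCircle (1:ℝ)) := by
  intro hc
  have hinj : Function.Injective (fun s : ℝ => ((s : AddCircle (1:ℝ)), round s)) := by
    intro s t hst
    simp only [Prod.mk.injEq] at hst
    obtain ⟨h1, h2⟩ := hst
    obtain ⟨k, hk⟩ := AddSubgroup.mem_zmultiples_iff.mp ((QuotientAddGroup.eq_iff_sub_mem).mp h1)
    rw [zsmul_eq_mul, mul_one] at hk
    have hk' : s = t + k := by linarith
    rw [hk', round_add_intCast] at h2
    have hk0 : k = 0 := by omega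
    rw [hk', hk0]; simp
  have : Countable ℝ := hinj.countable
  exact not_countable this

/-- If `ψ : ℝⁿ × (⊕ι ℤ) → ℝ/ℤ` (with `ℝⁿ` a vector group and `⊕ι ℤ` countable discrete) is
a continuous surjective homomorphism into the circle group, then its restriction to the
vector factor is already surjective. -/
theorem vector_factor_surjective_circle
    (n : ℕ) (ι : Type*) [Countable ι]
    [TopologicalSpace (ι →₀ ℤ)] [DiscreteTopology (ι →₀ ℤ)]
    (ψ : ((Fin n → ℝ) × (ι →₀ ℤ)) →+ AddCircle (1 : ℝ))
    (hcont : Continuous ψ) (hsurj : Function.Surjective ψ) :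
    Function.Surjective (fun v : Fin n → ℝ => ψ (v, 0)) := by
  -- Step 1: there is `v` with `ψ (v, 0) ≠ 0`.
  have hex : ∃ v : Fin n → ℝ, ψ (v, 0) ≠ 0 := by
    by_contra h
    push_neg at h
    have hsurj' : Function.Surjective (fun m : ι →₀ ℤ => ψ (0, m)) := by
      intro t
      obtain ⟨⟨v, m⟩, hvm⟩ := hsurj t
      refine ⟨m, ?_⟩
      have : ψ (v, m) = ψ (v, 0) + ψ (0, m) := by
        rw [← map_add]; congr 1 <;> simp
      rw [← hvm, this, h v, zero_add]
    exact addCircle_uncountable hsurj'.countable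
  obtain ⟨v, hv⟩ := hex
  set c : ℝ := ‖ψ (v, 0)‖ with hc
  have hcpos : 0 < c := by
    simpa [hc] using norm_pos_iff.mpr hv
  -- Step 2: main argument
  intro y
  -- write y = m • z with ‖z‖ ≤ c
  obtain ⟨s, rfl⟩ := QuotientAddGroup.mk_surjective y
  obtain ⟨m, hm⟩ : ∃ m : ℕ, |s| / (m + 1) ≤ c := by
    obtain ⟨m, hm⟩ := exists_nat_gt (|s| / c)
    refine ⟨m, ?_⟩
    rw [div_le_iff₀ (by positivity)]
    rw [div_lt_iff₀ hcpos] at hm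
    nlinarith [abs_nonneg s, hcpos]
  set z : AddCircle (1:ℝ) := ((s / (m + 1) : ℝ) : AddCircle (1:ℝ)) with hz
  have hzn : ‖z‖ ≤ c := by
    calc ‖z‖ ≤ |s / (m+1)| := by
          rw [hz]
          exact le_trans (QuotientAddGroup.norm_mk_le_norm (S := AddSubgroup.zmultiples (1:ℝ)))
            (le_of_eq (Real.norm_eq_abs _))
      _ = |s| / (m+1) := by rw [abs_div, abs_of_pos (by positivity : (0:ℝ) < m+1)]
      _ ≤ c := hm
  -- IVT: there is t with ‖ψ (t • v, 0)‖ = ‖z‖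
  have hcontg : Continuous (fun t : ℝ => ‖ψ (t • v, 0)‖) := by
    apply continuous_norm.comp
    exact hcont.comp ((continuous_id.smul continuous_const).prodMk continuous_const)
  have hmem : ‖z‖ ∈ Set.Icc (‖ψ ((0:ℝ) • v, 0)‖) (‖ψ ((1:ℝ) • v, 0)‖) := by
    constructor
    · simp [norm_nonneg, show ψ (0, 0) = 0 from map_zero ψ]
    · simpa using hzn
  obtain ⟨t, _, ht⟩ := intermediate_value_Icc (by norm_num : (0:ℝ) ≤ 1)
    (hcontg.continuousOn) hmem
  -- conclude
  have hy : ((s : ℝ) : AddCircle (1:ℝ)) = (m + 1) • z := by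
    rw [hz, ← AddCircle.coe_nsmul, nsmul_eq_mul]
    congr 1
    field_simp
    push_cast
    ring
  rcases addCircle_norm_eq_norm ht with h1 | h1
  · refine ⟨(m + 1) • (t • v), ?_⟩
    have : ((((m:ℕ) + 1) • (t • v) : Fin n → ℝ), (0 : ι →₀ ℤ))
        = ((m:ℕ) + 1) • ((t • v : Fin n → ℝ), (0 : ι →₀ ℤ)) := by simp
    simp only [this, map_nsmul, h1]
    exact hy.symm
  · refine ⟨(m + 1) • (-(t • v)), ?_⟩
    have h2 : ψ (-(t • v), 0) = z := by
      have : ((-(t • v) : Fin n → ℝ), (0 : ι →₀ ℤ))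
          = -((t • v : Fin n → ℝ), (0 : ι →₀ ℤ)) := by simp
      rw [this, map_neg, h1, neg_neg]
    have : ((((m:ℕ) + 1) • (-(t • v)) : Fin n → ℝ), (0 : ι →₀ ℤ))
        = ((m:ℕ) + 1) • ((-(t • v) : Fin n → ℝ), (0 : ι →₀ ℤ)) := by simp
    simp only [this, map_nsmul, h2]
    exact hy.symm
end
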